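/- Let T be the algebraic ℤ²-action on X = Y^ℤ, where Y is the Pontryagin dual of ℤ[1/2], defined by (T_{(1,0)} x)_k = 2 x_k and (T_{(0,1)} x)_k = x_{k+1}. Then for every n ≥ 1, the number of points fixed by the subgroup (n,0)ℤ ⊕ (0,1)ℤ is 2^n − 1, while the number of points fixed by (1,0)ℤ ⊕ (0,n)ℤ is 1. -/

import Mathlib

/-- The 2-adic solenoid, the Pontryagin dual of `ℤ[1/2]`: a character is determined by
its values `y k` at `2^{-k}`, subject to `2 • y (k+1) = y k`. -/
def Solenoid : Type :=
  {y : ℕ → AddCircle (1 : ℝ) // ∀ k, (2 : ℕ) • y (k + 1) = y k}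

/-- Multiplication by 2 on the solenoid (the dual of multiplication by 2 on `ℤ[1/2]`). -/
noncomputable def double (y : Solenoid) : Solenoid :=
  ⟨fun k => (2 : ℕ) • y.1 k, fun k => congrArg (fun t => (2 : ℕ) • t) (y.2 k)⟩

lemma double_iter (j : ℕ) (y : Solenoid) (k : ℕ) :
    (double^[j] y).1 k = (2 ^ j : ℕ) • y.1 k := by
  induction j generalizing y with
  | zero => simp
  | succ j ih =>
      rw [Function.iterate_succ_apply, ih]
      show (2 ^ j : ℕ) • ((2:ℕ) • y.1 k) = _
      rw [smul_smul, mul_comm, ← pow_succ']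

/-- Count of `m`-torsion points in `ℝ/ℤ`. -/
lemma card_torsion (m : ℕ) [NeZero m] :
    Nat.card {u : AddCircle (1 : ℝ) // m • u = 0} = m := by
  have e : ZMod m ≃ {u : AddCircle (1 : ℝ) // m • u = 0} := by
    refine Equiv.ofBijective
      (fun j => ⟨ZMod.toAddCircle j, by
        rw [← map_nsmul]
        simp [nsmul_eq_mul, ZMod.natCast_self]⟩) ⟨?_, ?_⟩
    · intro a b h
      exact ZMod.toAddCircle_injective m (congrArg Subtype.val h)
    · rintro ⟨u, hu⟩
      induction u using QuotientAddGroup.induction_on with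
      | H x =>
        rw [← AddCircle.coe_nsmul, AddCircle.coe_eq_zero_iff] at hu
        obtain ⟨k, hk⟩ := hu
        have hm : (m : ℝ) ≠ 0 := Nat.cast_ne_zero.mpr (NeZero.ne m)
        have hx : (k : ℝ) / m = x := by
          rw [div_eq_iff hm]
          simpa [zsmul_eq_mul, nsmul_eq_mul, mul_comm] using hk
        exact ⟨(k : ZMod m), Subtype.ext (show ZMod.toAddCircle ((k : ZMod m)) = ((x : ℝ) : AddCircle (1:ℝ)) from by rw [ZMod.toAddCircle_intCast, hx])⟩
  rw [← Nat.card_congr e, Nat.card_zmod]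

/-- For the `ℤ²`-action on `X = Solenoid^ℤ` generated by coordinatewise doubling
`T_{(1,0)}` and the shift `T_{(0,1)}`, the points fixed by the subgroup
`(n,0)ℤ ⊕ (0,1)ℤ` number `2^n − 1`, while the points fixed by `(1,0)ℤ ⊕ (0,n)ℤ`
number `1`. -/
theorem solenoid_shift_fixed_points (n : ℕ) (hn : 1 ≤ n) :
    Nat.card {x : ℤ → Solenoid //
        (∀ i, double^[n] (x i) = x i) ∧ (∀ i, x (i + 1) = x i)} = 2 ^ n - 1 ∧
    Nat.card {x : ℤ → Solenoid //
        (∀ i, double (x i) = x i) ∧ (∀ i, x (i + n) = x i)} = 1 := by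
  constructor
  · -- first count
    set m : ℕ := 2 ^ n - 1 with hm
    have h2n : 2 ^ n = m + 1 := by
      have : 1 ≤ 2 ^ n := Nat.one_le_two_pow
      omega
    haveI : NeZero m := ⟨by
      have : 2 ≤ 2 ^ n := by
        calc 2 = 2 ^ 1 := (pow_one 2).symm
        _ ≤ 2 ^ n := Nat.pow_le_pow_right (by norm_num) hn
      omega⟩
    -- torsion facts
    have key : ∀ z : AddCircle (1 : ℝ), m • z = 0 → (2 ^ n : ℕ) • z = z := by
      intro z hz
      rw [h2n, succ_nsmul, hz, zero_add]
    -- the equivalence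
    have e : {x : ℤ → Solenoid //
        (∀ i, double^[n] (x i) = x i) ∧ (∀ i, x (i + 1) = x i)} ≃
        {u : AddCircle (1 : ℝ) // m • u = 0} := by
      refine ⟨fun x => ⟨(x.1 0).1 0, ?_⟩, fun z => ⟨fun _ =>
          ⟨fun k => (2 ^ ((n - 1) * k) : ℕ) • z.1, ?_⟩, ?_, fun i => rfl⟩, ?_, ?_⟩
      · -- forward well-defined: m-torsion
        have h := congrArg (fun y : Solenoid => y.1 0) (x.2.1 0)
        simp only [double_iter] at h
        have h' : (m + 1) • (x.1 0).1 0 = (x.1 0).1 0 := by rwa [← h2n]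
        rw [succ_nsmul] at h'
        exact add_eq_right.mp h'
      · -- the constructed family is in the solenoid
        intro k
        have hzn : (2 ^ n : ℕ) • z.1 = z.1 := key z.1 z.2
        show (2:ℕ) • ((2 ^ ((n - 1) * (k + 1)) : ℕ) • z.1) = (2 ^ ((n - 1) * k) : ℕ) • z.1
        rw [smul_smul]
        have hexp : (2:ℕ) * 2 ^ ((n - 1) * (k + 1)) = 2 ^ ((n - 1) * k) * 2 ^ n := by
          obtain ⟨n', rfl⟩ : ∃ n', n = n' + 1 := ⟨n - 1, by omega⟩
          rw [← pow_succ', ← pow_add]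
          simp only [Nat.succ_sub_one]
          have he : n' * (k + 1) + 1 = n' * k + (n' + 1) := by ring
          rw [he]
        rw [hexp, mul_smul, hzn]
      · -- fixed by double^[n]
        intro i
        apply Subtype.ext
        funext k
        erw [double_iter]
        show (2 ^ n : ℕ) • ((2 ^ ((n - 1) * k) : ℕ) • z.1) =
          (2 ^ ((n - 1) * k) : ℕ) • z.1
        rw [smul_comm]
        conv_lhs => rw [key z.1 z.2]
      · -- left inverse
        rintro ⟨x, hx1, hx2⟩
        apply Subtype.ext
        funext i
        -- x is constant
        have hconst : ∀ i : ℤ, x i = x 0 := by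
          intro i
          induction i using Int.induction_on with
          | zero => rfl
          | succ j ih => rw [hx2 j, ih]
          | pred j ih =>
              have := hx2 (-(j : ℤ) - 1)
              rw [sub_add_cancel] at this
              rw [← this, ih]
        -- coordinates determined by coordinate 0
        have htor : ∀ k, (2 ^ n : ℕ) • (x 0).1 k = (x 0).1 k := by
          intro k
          have h := congrArg (fun y : Solenoid => y.1 k) (hx1 0)
          simpa only [double_iter] using h
        have hy : ∀ k, (x 0).1 k = (2 ^ ((n - 1) * k) : ℕ) • (x 0).1 0 := by
          intro k
          induction k with
          | zero => simp
          | succ k ih =>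
              have hrel := (x 0).2 k
              have : (2 ^ (n - 1) : ℕ) • ((2 : ℕ) • (x 0).1 (k + 1)) =
                  (2 ^ (n - 1) : ℕ) • (x 0).1 k := by rw [hrel]
              rw [smul_smul, ← pow_succ] at this
              have hn1 : n - 1 + 1 = n := by omega
              rw [hn1, htor] at this
              rw [this, ih, smul_smul, ← pow_add]
              congr 2
              cases n with
              | zero => omega
              | succ n' => simp [Nat.succ_sub_one]; ring
        simp only
        apply Subtype.ext
        funext k
        rw [hconst i, hy k]
      · -- right inverse
        rintro ⟨z, hz⟩
        apply Subtype.ext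
        show (2 ^ ((n - 1) * 0) : ℕ) • z = z
        simp
    rw [Nat.card_congr e, card_torsion]
  · -- second count: only the zero point
    have zeroS : Solenoid := ⟨fun _ => 0, fun k => smul_zero 2⟩
    have hzero : ∀ x : {x : ℤ → Solenoid //
        (∀ i, double (x i) = x i) ∧ (∀ i, x (i + n) = x i)},
        x.1 = fun _ => (⟨fun _ => 0, fun _ => smul_zero 2⟩ : Solenoid) := by
      rintro ⟨x, hx1, _⟩
      funext i
      apply Subtype.ext
      funext k
      have h := congrArg (fun y : Solenoid => y.1 k) (hx1 i)
      have h' : (2 : ℕ) • (x i).1 k = (x i).1 k := h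
      rw [two_nsmul] at h'
      exact add_eq_right.mp (by rwa [add_comm] at h')
    haveI : Unique {x : ℤ → Solenoid //
        (∀ i, double (x i) = x i) ∧ (∀ i, x (i + n) = x i)} := by
      refine ⟨⟨⟨fun _ => ⟨fun _ => 0, fun _ => smul_zero 2⟩, ?_, ?_⟩⟩, ?_⟩
      · intro i; apply Subtype.ext; funext k; exact smul_zero 2
      · intro i; rfl
      · intro x
        apply Subtype.ext
        rw [hzero x]
        rfl
    exact Nat.card_unique
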